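/- Fix α ∈ (1/2,1). Define, for integers n and 1 ≤ i ≤ (1−α)n − 1, φ_e(i) = (n−1)·( n²/((αn−i)((1−α)n−i)(n+2i)) − 1/(n+2i) ). There exists a constant C > 0 such that for every n for which αn is an integer, | Σ_{i=1}^{(1−α)n−1} φ_e(i) − n·log(n)/((2α−1)(3−2α)) | ≤ C·n. Equivalently, the exact identity holds: Σ_{i=1}^{(1−α)n−1} φ_e(i) = ((n−1)/((2α−1)(3−2α)))·H_{(1−α)n−1} − ((n−1)/((2α−1)(1+2α)))·(H_{αn−1} − H_{(2α−1)n}) + ( 2/((2α−1)(3−2α)) − 2/((2α−1)(1+2α)) − 1 )·Σ_{i=1}^{(1−α)n−1} (n−1)/(n+2i), which is n·log(n)/((2α−1)(3−2α)) + O(n). -/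

import Mathlib

open Finset Real

/-- The `k`-th harmonic number `H_k = ∑_{i=1}^k 1/i`. -/
noncomputable def harmR (k : ℕ) : ℝ := ∑ i ∈ Finset.range k, 1 / ((i : ℝ) + 1)

/-- The expected sojourn time in mode `i` of phase 1 on the star network of `n` nodes:
`φ_e(i) = (n-1)( n²/((αn-i)((1-α)n-i)(n+2i)) - 1/(n+2i) )`. -/
noncomputable def phiE (α : ℝ) (n i : ℕ) : ℝ :=
  ((n : ℝ) - 1) * ((n : ℝ) ^ 2
      / ((α * n - i) * ((1 - α) * n - i) * ((n : ℝ) + 2 * i))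
    - 1 / ((n : ℝ) + 2 * i))

lemma harmR_eq (k : ℕ) : harmR k = ((harmonic k : ℚ) : ℝ) := by
  unfold harmR harmonic
  push_cast
  simp [one_div]

lemma harmR_nonneg (k : ℕ) : 0 ≤ harmR k := by
  unfold harmR
  apply Finset.sum_nonneg
  intro i _
  positivity

lemma harmR_succ (k : ℕ) : harmR (k+1) = harmR k + 1/((k:ℝ)+1) :=
  Finset.sum_range_succ _ k

lemma harmR_le_one_add_log (k : ℕ) : harmR k ≤ 1 + Real.log k := by
  rw [harmR_eq]; exact_mod_cast harmonic_le_one_add_log k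

lemma log_le_harmR (k : ℕ) : Real.log (k+1) ≤ harmR k := by
  rw [harmR_eq]
  have := log_add_one_le_harmonic k
  push_cast at this ⊢
  exact this

lemma harmR_sub_nonneg {m k : ℕ} (h : m ≤ k) : 0 ≤ harmR k - harmR m := by
  unfold harmR
  rw [sub_nonneg]
  apply Finset.sum_le_sum_of_subset_of_nonneg (Finset.range_subset_range.2 h)
  intro i _ _; positivity

lemma harmR_sub_le {m k : ℕ} (h : m ≤ k) :
    harmR k - harmR m ≤ ((k : ℝ) - m) / ((m : ℝ) + 1) := by
  unfold harmR
  have hsplit : ∑ i ∈ Finset.range m, 1/((i:ℝ)+1) + ∑ i ∈ Finset.Ico m k, 1/((i:ℝ)+1)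
      = ∑ i ∈ Finset.range k, 1/((i:ℝ)+1) := by
    simp only [Finset.range_eq_Ico]
    exact Finset.sum_Ico_consecutive _ (Nat.zero_le m) h
  have hb : ∑ i ∈ Finset.Ico m k, 1/((i:ℝ)+1) ≤ ((k : ℝ) - m) / ((m : ℝ) + 1) := by
    calc ∑ i ∈ Finset.Ico m k, 1/((i:ℝ)+1) ≤ ∑ i ∈ Finset.Ico m k, 1/((m:ℝ)+1) := by
          apply Finset.sum_le_sum
          intro i hi
          have him : m ≤ i := (Finset.mem_Ico.1 hi).1
          have : (m:ℝ) + 1 ≤ (i:ℝ) + 1 := by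
            have : (m:ℝ) ≤ i := Nat.cast_le.2 him
            linarith
          apply one_div_le_one_div_of_le (by positivity) this
      _ = ((k - m : ℕ) : ℝ) * (1/((m:ℝ)+1)) := by
          rw [Finset.sum_const, Nat.card_Ico, nsmul_eq_mul]
      _ = ((k : ℝ) - m) / ((m : ℝ) + 1) := by
          rw [Nat.cast_sub h]; ring
  linarith

lemma sum_inv_sub (c : ℕ) : ∀ b : ℕ, b < c →
    ∑ i ∈ Finset.Icc 1 b, 1/((c:ℝ) - i) = harmR (c-1) - harmR (c-1-b) := by
  intro b
  induction b with
  | zero => intro _; simp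
  | succ b ih =>
    intro h
    rw [Finset.sum_Icc_succ_top (by omega : 1 ≤ b + 1), ih (by omega)]
    have h1 : c - 1 - b = (c - 1 - (b+1)) + 1 := by omega
    have h2 : c - 1 - (b + 1) + (b + 2) = c := by omega
    have h2' : ((c - 1 - (b+1) : ℕ) : ℝ) = (c : ℝ) - b - 2 := by
      have := congrArg (Nat.cast : ℕ → ℝ) h2
      push_cast at this
      linarith
    rw [h1, harmR_succ, h2']
    push_cast
    ring

lemma pf_decomp (x N I : ℝ) (hAI : 0 < x*N - I) (hNAI : 0 < N - x*N - I)
    (hI : 0 < N + 2*I) (h1 : 0 < 2*x - 1) (h2 : 0 < 3 - 2*x) (h3 : 0 < 1 + 2*x) :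
    (N - 1) * (N^2 / ((x*N - I) * ((1-x)*N - I) * (N + 2*I)) - 1/(N + 2*I))
      = (N-1)/((2*x-1)*(3-2*x)) * (1/(N - x*N - I))
        - (N-1)/((2*x-1)*(1+2*x)) * (1/(x*N - I))
        + (2/((2*x-1)*(3-2*x)) - 2/((2*x-1)*(1+2*x)) - 1) * ((N-1)/(N + 2*I)) := by
  have e1 : (1-x)*N - I = N - x*N - I := by ring
  rw [e1]
  have := hAI.ne'; have := hNAI.ne'; have := hI.ne'; have := h1.ne'; have := h2.ne'; have := h3.ne'
  field_simp
  have : N*(1-x) - I ≠ 0 := by nlinarith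
  have : N*x - I ≠ 0 := by nlinarith
  have : 3 - x*2 ≠ 0 := by nlinarith
  have : 1 + x*2 ≠ 0 := by nlinarith
  have : x*2 - 1 ≠ 0 := by nlinarith
  have : N + I*2 ≠ 0 := by nlinarith
  field_simp
  ring

lemma nat_facts (α : ℝ) (hα : 1/2 < α) (hα1 : α < 1) (n a : ℕ) (hn : 2 ≤ n)
    (ha : (a:ℝ) = α * n) : a < n ∧ n + 1 ≤ 2*a := by
  have hN : (0:ℝ) < n := by
    have : (2:ℝ) ≤ n := by exact_mod_cast hn
    linarith
  constructor
  · by_contra hc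
    push_neg at hc
    have : (n:ℝ) ≤ a := Nat.cast_le.2 hc
    rw [ha] at this
    nlinarith
  · by_contra hc
    push_neg at hc
    have h' : 2*a ≤ n := by omega
    have : ((2*a : ℕ):ℝ) ≤ n := Nat.cast_le.2 h'
    push_cast at this
    rw [ha] at this
    nlinarith

lemma key_identity (α : ℝ) (hα : 1/2 < α) (hα1 : α < 1) (n a : ℕ) (hn : 2 ≤ n)
    (ha : (a : ℝ) = α * n) :
    (∑ i ∈ Finset.Icc 1 (n - a - 1), phiE α n i)
      = (((n : ℝ) - 1) / ((2*α - 1) * (3 - 2*α))) * harmR (n - a - 1)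
        - (((n : ℝ) - 1) / ((2*α - 1) * (1 + 2*α))) * (harmR (a - 1) - harmR (2*a - n))
        + (2 / ((2*α - 1) * (3 - 2*α)) - 2 / ((2*α - 1) * (1 + 2*α)) - 1)
          * ∑ i ∈ Finset.Icc 1 (n - a - 1), ((n : ℝ) - 1) / ((n : ℝ) + 2 * i) := by
  obtain ⟨han, h2a⟩ := nat_facts α hα hα1 n a hn ha
  have hN : (0:ℝ) < n := by
    have : (2:ℝ) ≤ n := by exact_mod_cast hn
    linarith
  have h2a' : (n:ℝ) + 1 ≤ 2*(a:ℝ) := by exact_mod_cast h2a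
  have hm : ((n - a - 1 : ℕ) : ℝ) = (n:ℝ) - a - 1 := by
    have h : (n - a - 1) + (a + 1) = n := by omega
    have := congrArg (Nat.cast : ℕ → ℝ) h
    push_cast at this
    linarith
  have hna : ((n - a : ℕ) : ℝ) = (n:ℝ) - a := by
    have h : (n - a) + a = n := by omega
    have := congrArg (Nat.cast : ℕ → ℝ) h
    push_cast at this
    linarith
  have hpt : ∀ i ∈ Finset.Icc 1 (n - a - 1), phiE α n i
      = (((n:ℝ)-1)/((2*α-1)*(3-2*α))) * (1/((n:ℝ) - α*(n:ℝ) - i))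
        - (((n:ℝ)-1)/((2*α-1)*(1+2*α))) * (1/(α*(n:ℝ) - i))
        + (2/((2*α-1)*(3-2*α)) - 2/((2*α-1)*(1+2*α)) - 1) * (((n:ℝ)-1)/((n:ℝ)+2*i)) := by
    intro i hi
    obtain ⟨hi1, hi2⟩ := Finset.mem_Icc.1 hi
    have hiR : (i:ℝ) ≤ (n:ℝ) - a - 1 := by
      rw [← hm]; exact Nat.cast_le.2 hi2
    have hi0 : (0:ℝ) < i := by
      have : (1:ℕ) ≤ i := hi1
      have : (1:ℝ) ≤ i := by exact_mod_cast this
      linarith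
    exact pf_decomp α (n:ℝ) (i:ℝ)
      (by rw [← ha]; linarith)
      (by rw [← ha]; linarith)
      (by linarith)
      (by linarith) (by linarith) (by linarith)
  rw [Finset.sum_congr rfl hpt, Finset.sum_add_distrib, Finset.sum_sub_distrib,
    ← Finset.mul_sum, ← Finset.mul_sum, ← Finset.mul_sum]
  have hs1 : ∑ i ∈ Finset.Icc 1 (n - a - 1), 1/((n:ℝ) - α*(n:ℝ) - i)
      = harmR (n - a - 1) := by
    have hcongr : ∀ i ∈ Finset.Icc 1 (n - a - 1),
        1/((n:ℝ) - α*(n:ℝ) - i) = 1/(((n - a : ℕ):ℝ) - i) := by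
      intro i _
      rw [hna, ← ha]
    rw [Finset.sum_congr rfl hcongr, sum_inv_sub (n - a) (n - a - 1) (by omega)]
    have e1 : n - a - 1 - (n - a - 1) = 0 := by omega
    rw [e1]
    simp [harmR]
  have hs2 : ∑ i ∈ Finset.Icc 1 (n - a - 1), 1/(α*(n:ℝ) - i)
      = harmR (a - 1) - harmR (2*a - n) := by
    have hcongr : ∀ i ∈ Finset.Icc 1 (n - a - 1),
        1/(α*(n:ℝ) - i) = 1/(((a : ℕ):ℝ) - i) := by
      intro i _
      rw [← ha]
    rw [Finset.sum_congr rfl hcongr, sum_inv_sub a (n - a - 1) (by omega)]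
    have e1 : a - 1 - (n - a - 1) = 2*a - n := by omega
    rw [e1]
  rw [hs1, hs2]

set_option maxHeartbeats 1600000 in
lemma bound_part (α : ℝ) (hα : 1/2 < α) (hα1 : α < 1) (n a : ℕ) (hn : 2 ≤ n)
    (ha : (a : ℝ) = α * n) :
    |(∑ i ∈ Finset.Icc 1 (n - a - 1), phiE α n i)
        - (n : ℝ) * Real.log n / ((2*α - 1) * (3 - 2*α))|
      ≤ ((1/((2*α-1)*(3-2*α))) * (2 + 2*|Real.log (1-α)|)
          + (1/((2*α-1)*(1+2*α))) * ((1-α)/(2*α-1))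
          + |2/((2*α-1)*(3-2*α)) - 2/((2*α-1)*(1+2*α)) - 1| + 1) * n := by
  obtain ⟨han, h2a⟩ := nat_facts α hα hα1 n a hn ha
  have hN2 : (2:ℝ) ≤ n := by exact_mod_cast hn
  have hN : (0:ℝ) < n := by linarith
  have h2a' : (n:ℝ) + 1 ≤ 2*(a:ℝ) := by exact_mod_cast h2a
  have hb1 : 0 < (2*α-1)*(3-2*α) := by nlinarith
  have hb2 : 0 < (2*α-1)*(1+2*α) := by nlinarith
  set L := |Real.log (1-α)| with hL
  have hL0 : 0 ≤ L := abs_nonneg _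
  have hlog1a1 : -L ≤ Real.log (1-α) := neg_abs_le _
  have hlog1a2 : Real.log (1-α) ≤ L := le_abs_self _
  have hlogN0 : 0 ≤ Real.log n := Real.log_nonneg (by linarith)
  have hlogNn : Real.log n ≤ (n:ℝ) := by
    have := Real.log_le_sub_one_of_pos hN
    linarith
  -- casts
  have hna : ((n - a : ℕ) : ℝ) = (n:ℝ) - a := by
    have h : (n - a) + a = n := by omega
    have := congrArg (Nat.cast : ℕ → ℝ) h
    push_cast at this; linarith
  have hm : ((n - a - 1 : ℕ) : ℝ) = (n:ℝ) - a - 1 := by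
    have h : (n - a - 1) + (a + 1) = n := by omega
    have := congrArg (Nat.cast : ℕ → ℝ) h
    push_cast at this; linarith
  have ham1 : ((a - 1 : ℕ) : ℝ) = (a:ℝ) - 1 := by
    have h : (a - 1) + 1 = a := by omega
    have := congrArg (Nat.cast : ℕ → ℝ) h
    push_cast at this; linarith
  have h2an : ((2*a - n : ℕ) : ℝ) = 2*(a:ℝ) - n := by
    have h : (2*a - n) + n = 2*a := by omega
    have := congrArg (Nat.cast : ℕ → ℝ) h
    push_cast at this; linarith
  -- harmonic facts
  set H1 := harmR (n - a - 1) with hH1def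
  set H2 := harmR (a - 1) - harmR (2*a - n) with hH2def
  have hH1nn : 0 ≤ H1 := harmR_nonneg _
  have hH1u : H1 ≤ 1 + Real.log n := by
    have hmono : H1 ≤ harmR n := by
      have := harmR_sub_nonneg (show n - a - 1 ≤ n by omega)
      linarith
    have := harmR_le_one_add_log n
    linarith
  have hH1l : Real.log (1-α) + Real.log n ≤ H1 := by
    have h1 : Real.log (((n - a - 1 : ℕ):ℝ) + 1) ≤ H1 := log_le_harmR _
    have h2 : ((n - a - 1 : ℕ):ℝ) + 1 = (1-α) * n := by
      rw [hm, ha]; ring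
    rw [h2] at h1
    rwa [Real.log_mul (by linarith) (by linarith)] at h1
  have hH2nn : 0 ≤ H2 := harmR_sub_nonneg (by omega)
  have hH2u : H2 ≤ (1-α)/(2*α-1) := by
    have h1 := harmR_sub_le (show 2*a - n ≤ a - 1 by omega)
    rw [ham1, h2an] at h1
    have c1 : (0:ℝ) ≤ (1-α)*n := by nlinarith
    have c2 : (a:ℝ) - 1 - (2*(a:ℝ) - n) ≤ (1-α)*n := by rw [ha]; nlinarith
    have c3 : (0:ℝ) < (2*α-1)*n := by nlinarith
    have c4 : (2*α-1)*(n:ℝ) ≤ (2*(a:ℝ) - n) + 1 := by rw [ha]; nlinarith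
    have h2 : ((a:ℝ) - 1 - (2*(a:ℝ) - n)) / ((2*(a:ℝ) - n) + 1)
        ≤ ((1-α)*n) / ((2*α-1)*n) := div_le_div₀ c1 c2 c3 c4
    have h3 : ((1-α)*(n:ℝ)) / ((2*α-1)*n) = (1-α)/(2*α-1) := by
      rw [mul_div_mul_right _ _ (ne_of_gt hN)]
    rw [h3] at h2
    linarith
  -- sum T
  set T := ∑ i ∈ Finset.Icc 1 (n - a - 1), ((n : ℝ) - 1) / ((n : ℝ) + 2 * i) with hTdef
  have hTnn : 0 ≤ T := by
    apply Finset.sum_nonneg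
    intro i _
    apply div_nonneg (by linarith)
    positivity
  have hTu : T ≤ (n:ℝ) := by
    have h1 : T ≤ ∑ i ∈ Finset.Icc 1 (n - a - 1), (1:ℝ) := by
      apply Finset.sum_le_sum
      intro i _
      rw [div_le_one (by positivity)]
      have : (0:ℝ) ≤ 2*(i:ℝ) := by positivity
      linarith
    rw [Finset.sum_const, Nat.card_Icc, nsmul_eq_mul, mul_one] at h1
    have h2 : ((n - a - 1 + 1 - 1 : ℕ) : ℝ) ≤ (n:ℝ) := Nat.cast_le.2 (by omega)
    linarith
  -- the X bound
  have hXu : ((n:ℝ)-1)*H1 - (n:ℝ)*Real.log n ≤ (2 + 2*L) * n := by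
    nlinarith [mul_le_mul_of_nonneg_left hH1u (show (0:ℝ) ≤ n by linarith)]
  have hXl : -((2 + 2*L) * n) ≤ ((n:ℝ)-1)*H1 - (n:ℝ)*Real.log n := by
    have h1 : ((n:ℝ)-1)*(Real.log (1-α) + Real.log n) ≤ ((n:ℝ)-1)*H1 :=
      mul_le_mul_of_nonneg_left hH1l (by linarith)
    nlinarith [hlog1a1, hlog1a2]
  have hX : |((n:ℝ)-1)*H1 - (n:ℝ)*Real.log n| ≤ (2 + 2*L) * n := abs_le.2 ⟨hXl, hXu⟩
  -- assemble
  have hne1 : (2*α-1) ≠ 0 := by nlinarith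
  have hne2 : (1+2*α) ≠ 0 := by nlinarith
  have hne3 : (3-2*α) ≠ 0 := by nlinarith
  rw [key_identity α hα hα1 n a hn ha]
  have hsplit : (((n : ℝ) - 1) / ((2*α - 1) * (3 - 2*α))) * H1
        - (((n : ℝ) - 1) / ((2*α - 1) * (1 + 2*α))) * H2
        + (2 / ((2*α - 1) * (3 - 2*α)) - 2 / ((2*α - 1) * (1 + 2*α)) - 1) * T
        - (n : ℝ) * Real.log n / ((2*α - 1) * (3 - 2*α))
      = (((n:ℝ)-1)*H1 - (n:ℝ)*Real.log n) / ((2*α - 1) * (3 - 2*α))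
        + (-((((n : ℝ) - 1) / ((2*α - 1) * (1 + 2*α))) * H2))
        + (2 / ((2*α - 1) * (3 - 2*α)) - 2 / ((2*α - 1) * (1 + 2*α)) - 1) * T := by
    ring
  rw [hsplit]
  calc |(((n:ℝ)-1)*H1 - (n:ℝ)*Real.log n) / ((2*α - 1) * (3 - 2*α))
        + (-((((n : ℝ) - 1) / ((2*α - 1) * (1 + 2*α))) * H2))
        + (2 / ((2*α - 1) * (3 - 2*α)) - 2 / ((2*α - 1) * (1 + 2*α)) - 1) * T|
      ≤ |(((n:ℝ)-1)*H1 - (n:ℝ)*Real.log n) / ((2*α - 1) * (3 - 2*α))|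
        + |(-((((n : ℝ) - 1) / ((2*α - 1) * (1 + 2*α))) * H2))|
        + |(2 / ((2*α - 1) * (3 - 2*α)) - 2 / ((2*α - 1) * (1 + 2*α)) - 1) * T| := by
        exact (abs_add_le _ _).trans (add_le_add_left (abs_add_le _ _) _)
    _ ≤ ((1/((2*α-1)*(3-2*α))) * (2 + 2*L)) * n
        + ((1/((2*α-1)*(1+2*α))) * ((1-α)/(2*α-1))) * n
        + |2/((2*α-1)*(3-2*α)) - 2/((2*α-1)*(1+2*α)) - 1| * n := by
        gcongr ?_ + ?_ + ?_
        · rw [abs_div, abs_of_pos hb1, div_le_iff₀ hb1]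
          calc |((n:ℝ)-1)*H1 - (n:ℝ)*Real.log n| ≤ (2 + 2*L) * n := hX
            _ = 1/((2*α-1)*(3-2*α)) * (2 + 2*L) * n * ((2*α-1)*(3-2*α)) := by
                field_simp
        · rw [abs_neg, abs_of_nonneg (mul_nonneg (div_nonneg (by linarith) hb2.le) hH2nn)]
          rw [div_mul_eq_mul_div, div_le_iff₀ hb2]
          have : ((n:ℝ)-1)*H2 ≤ (n:ℝ) * ((1-α)/(2*α-1)) := by
            nlinarith
          calc ((n:ℝ)-1)*H2 ≤ (n:ℝ) * ((1-α)/(2*α-1)) := this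
            _ = 1/((2*α-1)*(1+2*α)) * ((1-α)/(2*α-1)) * n * ((2*α-1)*(1+2*α)) := by
                field_simp
        · rw [abs_mul, abs_of_nonneg hTnn]
          exact mul_le_mul_of_nonneg_left hTu (abs_nonneg _)
    _ ≤ ((1/((2*α-1)*(3-2*α))) * (2 + 2*L)
          + (1/((2*α-1)*(1+2*α))) * ((1-α)/(2*α-1))
          + |2/((2*α-1)*(3-2*α)) - 2/((2*α-1)*(1+2*α)) - 1| + 1) * n := by
        nlinarith

/-- For the star-shaped network: the sum of expected sojourn times satisfies
`∑_{i=1}^{(1-α)n-1} φ_e(i) = n log(n)/((2α-1)(3-2α)) + O(n)`, via the exact harmonic-number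
identity. -/
theorem stmt19 (α : ℝ) (hα : 1/2 < α) (hα1 : α < 1) :
    (∃ C : ℝ, 0 < C ∧ ∀ n a : ℕ, 2 ≤ n → (a : ℝ) = α * n →
      |(∑ i ∈ Finset.Icc 1 (n - a - 1), phiE α n i)
          - (n : ℝ) * Real.log n / ((2*α - 1) * (3 - 2*α))| ≤ C * n) ∧
    (∀ n a : ℕ, 2 ≤ n → (a : ℝ) = α * n →
      (∑ i ∈ Finset.Icc 1 (n - a - 1), phiE α n i)
        = (((n : ℝ) - 1) / ((2*α - 1) * (3 - 2*α))) * harmR (n - a - 1)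
          - (((n : ℝ) - 1) / ((2*α - 1) * (1 + 2*α))) * (harmR (a - 1) - harmR (2*a - n))
          + (2 / ((2*α - 1) * (3 - 2*α)) - 2 / ((2*α - 1) * (1 + 2*α)) - 1)
            * ∑ i ∈ Finset.Icc 1 (n - a - 1), ((n : ℝ) - 1) / ((n : ℝ) + 2 * i)) := by
  refine ⟨⟨(1/((2*α-1)*(3-2*α))) * (2 + 2*|Real.log (1-α)|)
      + (1/((2*α-1)*(1+2*α))) * ((1-α)/(2*α-1))
      + |2/((2*α-1)*(3-2*α)) - 2/((2*α-1)*(1+2*α)) - 1| + 1, ?_,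
      fun n a hn ha => bound_part α hα hα1 n a hn ha⟩,
    fun n a hn ha => key_identity α hα hα1 n a hn ha⟩
  have hb1 : 0 < (2*α-1)*(3-2*α) := by nlinarith
  have hb2 : 0 < (2*α-1)*(1+2*α) := by nlinarith
  have h1 : 0 ≤ (1/((2*α-1)*(3-2*α))) * (2 + 2*|Real.log (1-α)|) :=
    mul_nonneg (one_div_nonneg.2 hb1.le) (by positivity)
  have h2 : 0 ≤ (1/((2*α-1)*(1+2*α))) * ((1-α)/(2*α-1)) :=
    mul_nonneg (one_div_nonneg.2 hb2.le) (div_nonneg (by linarith) (by linarith))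
  have h3 : 0 ≤ |2/((2*α-1)*(3-2*α)) - 2/((2*α-1)*(1+2*α)) - 1| := abs_nonneg _
  linarith
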